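/- Let g ∈ (0,π), t ∈ ℝ, t ∉ ℤ, with g·t ∈ 2πℤ, and define for nonzero integers k: a_k(t) = (1/2π)(∫_{-g}^{g} e^{iω(t-k)} dω + ∫_{|ω|∈[g,π]} e^{-iωk} dω). Then a_k(t) = (1/π)·sin(g k)·t/(k(k - t)). -/

import Mathlib

open Complex in
lemma exp_sub_exp (x : ℝ) :
    Complex.exp (Complex.I * x) - Complex.exp (Complex.I * (-(x:ℂ))) =
      2 * Complex.I * Real.sin x := by
  rw [show Complex.I * (x:ℂ) = (x:ℂ) * Complex.I by ring,
    show Complex.I * (-(x:ℂ)) = (-(x:ℂ)) * Complex.I by ring,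
    Complex.exp_mul_I, Complex.exp_mul_I, Complex.cos_neg, Complex.sin_neg, Complex.ofReal_sin]
  ring

theorem stmt6 (g t : ℝ) (hg : g ∈ Set.Ioo 0 Real.pi) (ht : ∀ n : ℤ, t ≠ (n : ℝ))
    (hgt : ∃ n : ℤ, g * t = 2 * Real.pi * n) (k : ℤ) (hk : k ≠ 0) (hkt : (k:ℝ) ≠ t) :
    ((1 / (2 * Real.pi) : ℝ) : ℂ) *
      ((∫ ω in (-g)..g, Complex.exp (Complex.I * ω * (t - k))) +
        ((∫ ω in (-Real.pi)..(-g), Complex.exp (-Complex.I * ω * k)) +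
          (∫ ω in g..Real.pi, Complex.exp (-Complex.I * ω * k)))) =
      (((1 / Real.pi) * Real.sin (g * k) * t / (k * ((k:ℝ) - t)) : ℝ) : ℂ) := by
  obtain ⟨n, hn⟩ := hgt
  have hd : ((t:ℂ) - (k:ℂ)) ≠ 0 := by
    rw [sub_ne_zero]; exact_mod_cast (Ne.symm hkt)
  have hkC : ((k:ℝ):ℂ) ≠ 0 := by exact_mod_cast (Int.cast_ne_zero (α := ℝ)).2 hk
  have hc1 : Complex.I * ((t:ℂ) - (k:ℂ)) ≠ 0 := mul_ne_zero Complex.I_ne_zero hd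
  have hc2 : -Complex.I * ((k:ℝ):ℂ) ≠ 0 := mul_ne_zero (neg_ne_zero.2 Complex.I_ne_zero) hkC
  have h1 : (∫ ω in (-g)..g, Complex.exp (Complex.I * ω * ((t:ℂ) - (k:ℂ))))
      = (((2 * Real.sin (g * (t - (k:ℝ))) / (t - (k:ℝ))) : ℝ) : ℂ) := by
    have : ∀ ω : ℝ, Complex.I * (ω:ℂ) * ((t:ℂ) - (k:ℂ)) = (Complex.I * ((t:ℂ) - (k:ℂ))) * ω :=
      fun ω => by ring
    simp_rw [this]
    rw [integral_exp_mul_complex hc1]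
    have e1 : Complex.I * ((t:ℂ) - (k:ℂ)) * (g:ℂ) = Complex.I * ((g * (t - (k:ℝ)) : ℝ) : ℂ) := by
      push_cast; ring
    have e2 : Complex.I * ((t:ℂ) - (k:ℂ)) * ((-g:ℝ):ℂ) = Complex.I * (-((g * (t - (k:ℝ)) : ℝ) : ℂ)) := by
      push_cast; ring
    rw [e1, e2, show (-((g * (t - (k:ℝ)) : ℝ) : ℂ)) = (((-(g * (t - (k:ℝ))) : ℝ)) : ℂ) by push_cast; ring]
    rw [show Complex.I * (((-(g * (t - (k:ℝ))) : ℝ)) : ℂ) = Complex.I * (-((g * (t - (k:ℝ)):ℝ):ℂ)) by push_cast; ring]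
    rw [exp_sub_exp (g * (t - (k:ℝ)))]
    push_cast
    field_simp
  have hkC' : ((k:ℤ):ℂ) ≠ 0 := Int.cast_ne_zero.2 hk
  have hc2 : -Complex.I * ((k:ℤ):ℂ) ≠ 0 := mul_ne_zero (neg_ne_zero.2 Complex.I_ne_zero) hkC'
  have h2 : ((∫ ω in (-Real.pi)..(-g), Complex.exp (-Complex.I * ω * (k:ℂ))) +
        (∫ ω in g..Real.pi, Complex.exp (-Complex.I * ω * (k:ℂ))))
      = ((((-2) * Real.sin (g * (k:ℝ)) / (k:ℝ)) : ℝ) : ℂ) := by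
    have hrw : ∀ ω : ℝ, -Complex.I * (ω:ℂ) * ((k:ℤ):ℂ) = (-Complex.I * ((k:ℤ):ℂ)) * ω :=
      fun ω => by ring
    simp_rw [hrw]
    rw [integral_exp_mul_complex hc2, integral_exp_mul_complex hc2]
    have e1 : -Complex.I * ((k:ℤ):ℂ) * ((-g:ℝ):ℂ) = Complex.I * (((g * (k:ℝ)):ℝ):ℂ) := by
      push_cast; ring
    have e2 : -Complex.I * ((k:ℤ):ℂ) * ((-Real.pi:ℝ):ℂ) = Complex.I * (((Real.pi * (k:ℝ)):ℝ):ℂ) := by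
      push_cast; ring
    have e3 : -Complex.I * ((k:ℤ):ℂ) * ((Real.pi:ℝ):ℂ) = Complex.I * (-(((Real.pi * (k:ℝ)):ℝ):ℂ)) := by
      push_cast; ring
    have e4 : -Complex.I * ((k:ℤ):ℂ) * ((g:ℝ):ℂ) = Complex.I * (-(((g * (k:ℝ)):ℝ):ℂ)) := by
      push_cast; ring
    rw [e1, e2, e3, e4]
    have comb : (Complex.exp (Complex.I * (((g * (k:ℝ)):ℝ):ℂ)) - Complex.exp (Complex.I * (((Real.pi * (k:ℝ)):ℝ):ℂ))) / (-Complex.I * ((k:ℤ):ℂ))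
        + (Complex.exp (Complex.I * (-(((Real.pi * (k:ℝ)):ℝ):ℂ))) - Complex.exp (Complex.I * (-(((g * (k:ℝ)):ℝ):ℂ)))) / (-Complex.I * ((k:ℤ):ℂ))
        = ((Complex.exp (Complex.I * (((g * (k:ℝ)):ℝ):ℂ)) - Complex.exp (Complex.I * (-(((g * (k:ℝ)):ℝ):ℂ))))
          - (Complex.exp (Complex.I * (((Real.pi * (k:ℝ)):ℝ):ℂ)) - Complex.exp (Complex.I * (-(((Real.pi * (k:ℝ)):ℝ):ℂ))))) / (-Complex.I * ((k:ℤ):ℂ)) := by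
      ring
    rw [comb, exp_sub_exp (g * (k:ℝ)), exp_sub_exp (Real.pi * (k:ℝ))]
    have hsin : Real.sin (Real.pi * (k:ℝ)) = 0 := by
      rw [mul_comm]; exact Real.sin_int_mul_pi k
    rw [hsin]
    push_cast
    rw [div_eq_iff hc2]
    field_simp
    ring
  rw [h1, h2]
  have hπ : Real.pi ≠ 0 := Real.pi_ne_zero
  have htk : t - (k:ℝ) ≠ 0 := sub_ne_zero.2 (Ne.symm hkt)
  have hkR : (k:ℝ) ≠ 0 := Int.cast_ne_zero.2 hk
  have hkt' : (k:ℝ) - t ≠ 0 := sub_ne_zero.2 hkt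
  have hs : Real.sin (g * (t - (k:ℝ))) = -Real.sin (g * (k:ℝ)) := by
    rw [show g * (t - (k:ℝ)) = (n:ℝ) * (2 * Real.pi) - g * (k:ℝ) by rw [mul_sub, hn]; ring]
    exact Real.sin_int_mul_two_pi_sub _ n
  norm_cast
  rw [hs]
  field_simp
  simp only [Int.cast_negSucc]
  push_cast
  ring
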